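/- Let (G,T) be an instance of the multiway cut problem admitting at least one multiway cut. Then there exists a smallest multiway cut S of (G,T) such that every v ∈ S belongs to an important isolating cut of some terminal t ∈ T. -/

import Mathlib

/-- The graph obtained from `G` by deleting the vertex set `B`
(edges incident to `B` are removed). -/
def SimpleGraph.deleteSet {V : Type*} (G : SimpleGraph V) (B : Set V) : SimpleGraph V where
  Adj u v := G.Adj u v ∧ u ∉ B ∧ v ∉ B
  symm := ⟨fun u v ⟨h, hu, hv⟩ => ⟨h.symm, hv, hu⟩⟩
  loopless := ⟨fun u h => G.loopless.irrefl u h.1⟩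

/-- `NR G A B` : the set of vertices not reachable from `A` in `G − B`. -/
def NR {V : Type*} (G : SimpleGraph V) (A B : Set V) : Set V :=
  {v | ∀ a ∈ A, ¬ (G.deleteSet B).Reachable a v}

/-- `K` is an `X–Y` separator: it is disjoint from `X ∪ Y` and its removal
leaves no path from `X` to `Y`. -/
def IsSeparator {V : Type*} (G : SimpleGraph V) (X Y K : Set V) : Prop :=
  Disjoint K (X ∪ Y) ∧ ∀ x ∈ X, ∀ y ∈ Y, ¬ (G.deleteSet K).Reachable x y

/-- The order `≺*` on `X–Y` separators: `K₁ ≺* K₂` iff `NR(G,Y,K₁) ⊊ NR(G,Y,K₂)`. -/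
def precStar {V : Type*} (G : SimpleGraph V) (Y K₁ K₂ : Set V) : Prop :=
  NR G Y K₁ ⊂ NR G Y K₂

/-- An important `X–Y` separator: a minimal separator `K` such that no separator
`K'` satisfies `K ≺* K'` and `|K'| ≤ |K|`. -/
def IsImportant {V : Type*} (G : SimpleGraph V) (X Y K : Set V) : Prop :=
  IsSeparator G X Y K ∧ (∀ K' ⊂ K, ¬ IsSeparator G X Y K') ∧
    ¬ ∃ K', IsSeparator G X Y K' ∧ precStar G Y K K' ∧ K'.ncard ≤ K.ncard

/-- A multiway cut of `(G,T)`: a set of non-terminal vertices whose removal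
separates every pair of distinct terminals. -/
def IsMultiwayCut {V : Type*} (G : SimpleGraph V) (T S : Set V) : Prop :=
  Disjoint S T ∧ ∀ t₁ ∈ T, ∀ t₂ ∈ T, t₁ ≠ t₂ → ¬ (G.deleteSet S).Reachable t₁ t₂


namespace MWCProof


variable {V : Type*} (G : SimpleGraph V)

open SimpleGraph

lemma deleteSet_le {B B' : Set V} (h : B' ⊆ B) : G.deleteSet B ≤ G.deleteSet B' := by
  intro u v hadj
  exact ⟨hadj.1, fun c => hadj.2.1 (h c), fun c => hadj.2.2 (h c)⟩

lemma reach_mono {B B' : Set V} (h : B' ⊆ B) {a b : V}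
    (hr : (G.deleteSet B).Reachable a b) : (G.deleteSet B').Reachable a b :=
  hr.mono (deleteSet_le G h)

lemma reach_eq_of_mem {B : Set V} {a b : V}
    (h : (G.deleteSet B).Reachable a b) (hb : b ∈ B) : a = b := by
  obtain ⟨p⟩ := h
  induction p with
  | nil => rfl
  | cons h' p ih =>
      have h1 := ih hb
      rw [h1] at h'
      exact absurd hb h'.2.2

lemma reach_closed {H : SimpleGraph V} {R : Set V}
    (hR : ∀ u u', u ∈ R → H.Adj u u' → u' ∈ R) {a b : V}
    (h : H.Reachable a b) : a ∈ R → b ∈ R := by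
  obtain ⟨p⟩ := h
  induction p with
  | nil => exact id
  | cons h' p ih => exact fun ha => ih (hR _ _ ha h')

lemma reach_transfer {B J : Set V} {a w : V}
    (h : (G.deleteSet B).Reachable a w)
    (hJ : ∀ v, (G.deleteSet B).Reachable a v → v ∉ J) :
    (G.deleteSet J).Reachable a w := by
  have key : w ∈ {v | (G.deleteSet B).Reachable a v ∧ (G.deleteSet J).Reachable a v} := by
    refine reach_closed ?_ h ⟨Reachable.refl a, Reachable.refl a⟩
    rintro u u' ⟨h1, h2⟩ hadj
    have h1' : (G.deleteSet B).Reachable a u' := h1.trans hadj.reachable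
    exact ⟨h1', h2.trans (SimpleGraph.Adj.reachable ⟨hadj.1, hJ u h1, hJ u' h1'⟩)⟩
  exact key.2

lemma reach_split {B C : Set V} {a b : V}
    (h : (G.deleteSet B).Reachable a b) (ha : a ∉ C) :
    (G.deleteSet (B ∪ C)).Reachable a b ∨
    ∃ z ∈ C, ∃ w, w ∉ B ∪ C ∧ (G.deleteSet (B ∪ C)).Reachable a w ∧ G.Adj w z := by
  obtain ⟨p⟩ := h
  revert ha
  induction p with
  | nil => exact fun _ => Or.inl (Reachable.refl _)
  | @cons u u' b h' p ih =>
      intro huC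
      obtain ⟨hadj, huB, hu'B⟩ := h'
      by_cases hu'C : u' ∈ C
      · exact Or.inr ⟨u', hu'C, u, by simp [huB, huC], Reachable.refl _, hadj⟩
      · have hAdj2 : (G.deleteSet (B ∪ C)).Adj u u' :=
          ⟨hadj, by simp [huB, huC], by simp [hu'B, hu'C]⟩
        rcases ih hu'C with hl | ⟨z, hz, w, hw, hrw, hadj2⟩
        · exact Or.inl (hAdj2.reachable.trans hl)
        · exact Or.inr ⟨z, hz, w, hw, hAdj2.reachable.trans hrw, hadj2⟩

lemma exists_min_measure {α : Type*} (s : Set α) (hne : s.Nonempty) (f : α → ℕ) :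
    ∃ a ∈ s, ∀ b ∈ s, f a ≤ f b := by
  have hM : (f '' s).Nonempty := hne.image f
  obtain ⟨a, has, hfa⟩ := Nat.sInf_mem hM
  exact ⟨a, has, fun b hb => hfa ▸ Nat.sInf_le ⟨b, hb, rfl⟩⟩

lemma exists_important_dominating [Fintype V] (X Y K : Set V)
    (hsep : IsSeparator G X Y K)
    (hess : ∀ k ∈ K, ¬ IsSeparator G X Y (K \ {k})) :
    ∃ J, IsImportant G X Y J ∧ J.ncard ≤ K.ncard ∧
      ∀ k ∈ K, k ∉ J → k ∈ NR G Y J := by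
  classical
  set QX : Set V := {v | ∃ x ∈ X, (G.deleteSet K).Reachable x v} with hQXdef
  set RY : Set V → Set V := fun J => {v | ∃ y ∈ Y, (G.deleteSet J).Reachable y v} with hRYdef
  have hNRmem : ∀ (Js : Set V) (v : V),
      v ∈ NR G Y Js ↔ ∀ a ∈ Y, ¬ (G.deleteSet Js).Reachable a v := fun _ _ => Iff.rfl
  have hRYmem : ∀ (Js : Set V) (v : V),
      v ∈ RY Js ↔ ∃ y ∈ Y, (G.deleteSet Js).Reachable y v := fun _ _ => Iff.rfl
  have hQXK : ∀ v ∈ QX, v ∉ K := by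
    rintro v ⟨x, hx, hr⟩ hvK
    have hxv := reach_eq_of_mem G hr hvK
    exact Set.disjoint_left.mp hsep.1 hvK (Or.inl (hxv ▸ hx))
  set C : Set (Set V) := {J | IsSeparator G X Y J ∧ J.ncard ≤ K.ncard ∧ J ∩ QX = ∅}
    with hCdef
  have hKC : K ∈ C := by
    refine ⟨hsep, le_rfl, Set.eq_empty_iff_forall_notMem.mpr ?_⟩
    rintro v ⟨hvK, hvQX⟩
    exact hQXK v hvQX hvK
  -- the automatic "nothing in QX ∪ K is Y-reachable" property of members of C
  have hAuto : ∀ J ∈ C, ∀ z ∈ QX ∪ K, ∀ y ∈ Y, ¬ (G.deleteSet J).Reachable y z := by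
    rintro J ⟨hJsep, _, hJQX⟩ z hz y hy hr
    have hJQX' : ∀ v, v ∈ J → v ∉ QX := by
      intro v hvJ hvQX
      exact Set.eq_empty_iff_forall_notMem.mp hJQX v ⟨hvJ, hvQX⟩
    have hzJ : z ∉ J := by
      intro hzJ
      have hyz := reach_eq_of_mem G hr hzJ
      exact Set.disjoint_left.mp hJsep.1 hzJ (Or.inr (hyz ▸ hy))
    cases hz with
    | inl hzQX =>
        obtain ⟨x, hx, hxz⟩ := hzQX
        have htrans : (G.deleteSet J).Reachable x z := by
          refine reach_transfer G hxz ?_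
          intro v hv hvJ
          exact hJQX' v hvJ ⟨x, hx, hv⟩
        exact hJsep.2 x hx y hy (htrans.trans hr.symm)
    | inr hzK =>
        have hdisj : Disjoint (K \ {z}) (X ∪ Y) := hsep.1.mono_left Set.diff_subset
        have hfail : ¬ ∀ x ∈ X, ∀ y' ∈ Y, ¬ (G.deleteSet (K \ {z})).Reachable x y' := by
          intro hblock; exact hess z hzK ⟨hdisj, hblock⟩
        push_neg at hfail
        obtain ⟨x, hx, y', hy', hr'⟩ := hfail
        have hxz : x ∉ ({z} : Set V) := by
          intro h
          rw [Set.mem_singleton_iff] at h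
          subst h
          exact Set.disjoint_left.mp hsep.1 hzK (Or.inl hx)
        have hzsub : ({z} : Set V) ⊆ K := by simpa using hzK
        rcases reach_split G hr' hxz with hl | ⟨z', hz', w, hw, hrw, hadj⟩
        · rw [Set.diff_union_of_subset hzsub] at hl
          exact hsep.2 x hx y' hy' hl
        · rw [Set.mem_singleton_iff] at hz'
          subst hz'
          rw [Set.diff_union_of_subset hzsub] at hw hrw
          have hwQX : w ∈ QX := ⟨x, hx, hrw⟩
          have hwJ : w ∉ J := fun hwJ => hJQX' w hwJ hwQX
          have htw : (G.deleteSet J).Reachable x w := by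
            refine reach_transfer G hrw ?_
            intro v hv hvJ
            exact hJQX' v hvJ ⟨x, hx, hv⟩
          have hxzr : (G.deleteSet J).Reachable x z' :=
            htw.trans (SimpleGraph.Adj.reachable ⟨hadj, hwJ, hzJ⟩)
          exact hJsep.2 x hx y hy (hxzr.trans hr.symm)
  -- extremal choice
  set N := Fintype.card V with hNdef
  set μ : Set V → ℕ := fun J => J.ncard * (N + 1) + (RY J).ncard with hμdef
  obtain ⟨J, hJC, hJmin⟩ := exists_min_measure C ⟨K, hKC⟩ μ
  obtain ⟨hJsep, hJcard, hJQX⟩ := hJC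
  have hJC' : J ∈ C := ⟨hJsep, hJcard, hJQX⟩
  have hRYb : ∀ Js : Set V, (RY Js).ncard ≤ N := by
    intro Js
    calc (RY Js).ncard ≤ (Set.univ : Set V).ncard :=
          Set.ncard_le_ncard (Set.subset_univ _) (Set.toFinite _)
    _ = N := by rw [Set.ncard_univ, Nat.card_eq_fintype_card]
  have lex1 : ∀ J' ∈ C, J'.ncard < J.ncard → False := by
    intro J' hJ'C hlt
    have h1 : μ J' < μ J := by
      have h2 : (RY J').ncard ≤ N := hRYb J'
      have h3 : J'.ncard + 1 ≤ J.ncard := hlt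
      have step1 : J'.ncard * (N + 1) + (RY J').ncard < (J'.ncard + 1) * (N + 1) := by
        have : J'.ncard * (N + 1) + (RY J').ncard < J'.ncard * (N + 1) + (N + 1) := by
          omega
        calc J'.ncard * (N + 1) + (RY J').ncard < J'.ncard * (N + 1) + (N + 1) := this
        _ = (J'.ncard + 1) * (N + 1) := by ring
      calc μ J' = J'.ncard * (N + 1) + (RY J').ncard := rfl
      _ < (J'.ncard + 1) * (N + 1) := step1
      _ ≤ J.ncard * (N + 1) := Nat.mul_le_mul_right _ h3
      _ ≤ μ J := Nat.le_add_right _ _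
    exact (hJmin J' hJ'C).not_gt h1
  -- minimality of J as a separator
  have hmin_sep : ∀ K' ⊂ J, ¬ IsSeparator G X Y K' := by
    intro K' hss hK'sep
    obtain ⟨u, huJ, huK'⟩ := Set.exists_of_ssubset hss
    have hsub : K' ⊆ J \ {u} := by
      intro a ha
      refine ⟨hss.1 ha, ?_⟩
      intro h
      rw [Set.mem_singleton_iff] at h
      subst h
      exact huK' ha
    have hJu_sep : IsSeparator G X Y (J \ {u}) :=
      ⟨hJsep.1.mono_left Set.diff_subset,
       fun x hx y hy hr => hK'sep.2 x hx y hy (reach_mono G hsub hr)⟩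
    have hJuC : J \ {u} ∈ C := by
      refine ⟨hJu_sep, le_trans (Set.ncard_le_ncard Set.diff_subset (Set.toFinite _)) hJcard, ?_⟩
      apply Set.eq_empty_iff_forall_notMem.mpr
      rintro v ⟨hv1, hv2⟩
      exact Set.eq_empty_iff_forall_notMem.mp hJQX v ⟨hv1.1, hv2⟩
    exact lex1 _ hJuC (Set.ncard_diff_singleton_lt_of_mem huJ (Set.toFinite _))
  -- no strictly dominating separator of at most the same size
  have hnoviol : ¬ ∃ W, IsSeparator G X Y W ∧ precStar G Y J W ∧ W.ncard ≤ J.ncard := by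
    rintro ⟨W, hWsep, hprec, hWcard⟩
    have hprec' : NR G Y J ⊂ NR G Y W := hprec
    have hsubRY : RY W ⊆ RY J := by
      intro v hv
      by_contra hnv
      have h1 : v ∈ NR G Y J := by
        rw [hNRmem]
        intro a ha hr
        exact hnv ((hRYmem J v).mpr ⟨a, ha, hr⟩)
      have h2 : v ∈ NR G Y W := hprec'.1 h1
      obtain ⟨y, hy, hr⟩ := (hRYmem W v).mp hv
      exact (hNRmem W v).mp h2 y hy hr
    have hwit : ∃ p, p ∈ RY J ∧ p ∉ RY W := by
      obtain ⟨p, hpW, hpJ⟩ := Set.exists_of_ssubset hprec'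
      refine ⟨p, ?_, ?_⟩
      · by_contra h
        exact hpJ (by
          rw [hNRmem]
          intro a ha hr
          exact h ((hRYmem J p).mpr ⟨a, ha, hr⟩))
      · intro h
        obtain ⟨y, hy, hr⟩ := (hRYmem W p).mp h
        exact (hNRmem W p).mp hpW y hy hr
    set W' : Set V := {w | w ∈ W ∧ ∃ z ∈ RY W, G.Adj z w} with hW'def
    have hW'W : W' ⊆ W := fun w hw => hw.1
    have hRYeq : RY W' = RY W := by
      apply Set.Subset.antisymm
      · rintro v ⟨y, hy, hr⟩
        refine reach_closed (R := RY W) ?_ hr ⟨y, hy, Reachable.refl y⟩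
        rintro u u' ⟨y', hy', hru⟩ hadj
        have huW : u ∉ W := by
          intro huW
          have := reach_eq_of_mem G hru huW
          exact Set.disjoint_left.mp hWsep.1 huW (Or.inr (this ▸ hy'))
        have hu'W : u' ∉ W := by
          intro hu'W
          exact hadj.2.2 ⟨hu'W, u, ⟨y', hy', hru⟩, hadj.1⟩
        exact ⟨y', hy', hru.trans (SimpleGraph.Adj.reachable ⟨hadj.1, huW, hu'W⟩)⟩
      · rintro v ⟨y, hy, hr⟩
        exact ⟨y, hy, reach_mono G hW'W hr⟩
    have hW'sep : IsSeparator G X Y W' := by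
      refine ⟨hWsep.1.mono_left hW'W, fun x hx y hy hr => ?_⟩
      have hx' : x ∈ RY W' := ⟨y, hy, hr.symm⟩
      rw [hRYeq] at hx'
      obtain ⟨y', hy', hr'⟩ := hx'
      exact hWsep.2 x hx y' hy' hr'.symm
    have hW'QX : W' ∩ QX = ∅ := by
      apply Set.eq_empty_iff_forall_notMem.mpr
      rintro w ⟨⟨hwW, z, hzRY, hadj⟩, hwQX⟩
      have hzJ : z ∈ RY J := hsubRY hzRY
      obtain ⟨yz, hyz, hrz⟩ := (hRYmem J z).mp hzJ
      have hzQXK : z ∉ QX ∪ K := fun hz => hAuto J hJC' z hz yz hyz hrz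
      obtain ⟨x, hx, hrw⟩ := hwQX
      have hwK : w ∉ K := hQXK w ⟨x, hx, hrw⟩
      have hzK : z ∉ K := fun h => hzQXK (Or.inr h)
      have hreach : (G.deleteSet K).Reachable x z :=
        hrw.trans (SimpleGraph.Adj.reachable ⟨hadj.symm, hwK, hzK⟩)
      exact hzQXK (Or.inl ⟨x, hx, hreach⟩)
    have hW'C : W' ∈ C :=
      ⟨hW'sep, le_trans (Set.ncard_le_ncard hW'W (Set.toFinite _)) (le_trans hWcard hJcard),
        hW'QX⟩
    obtain ⟨p, hpJ, hpW⟩ := hwit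
    have hpW' : p ∉ RY W := hpW
    have hstrict : (RY W').ncard < (RY J).ncard := by
      rw [hRYeq]
      exact Set.ncard_lt_ncard ⟨hsubRY, fun hsup => hpW (hsup hpJ)⟩ (Set.toFinite _)
    have hle : W'.ncard ≤ J.ncard :=
      le_trans (Set.ncard_le_ncard hW'W (Set.toFinite _)) hWcard
    have hμlt : μ W' < μ J := by
      calc μ W' = W'.ncard * (N + 1) + (RY W').ncard := rfl
      _ ≤ J.ncard * (N + 1) + (RY W').ncard :=
          Nat.add_le_add_right (Nat.mul_le_mul_right _ hle) _
      _ < J.ncard * (N + 1) + (RY J).ncard := Nat.add_lt_add_left hstrict _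
      _ = μ J := rfl
    exact (hJmin W' hW'C).not_gt hμlt
  refine ⟨J, ⟨hJsep, hmin_sep, hnoviol⟩, hJcard, ?_⟩
  intro k hk hkJ
  rw [hNRmem]
  intro a ha hr
  exact hAuto J hJC' k (Or.inr hk) a ha hr

end MWCProof

/-- if `(G,T)` admits a multiway cut, then it admits a smallest
multiway cut `S` such that every vertex of `S` belongs to an important
isolating cut of some terminal `t ∈ T`. -/
theorem smallest_mwc_in_important_isolating_cuts {V : Type*} [Fintype V]
    (G : SimpleGraph V) (T : Set V) (hex : ∃ S, IsMultiwayCut G T S) :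
    ∃ S, IsMultiwayCut G T S ∧
      (∀ S', IsMultiwayCut G T S' → S.ncard ≤ S'.ncard) ∧
      ∀ v ∈ S, ∃ t ∈ T, ∃ K, IsImportant G {t} (T \ {t}) K ∧ v ∈ K := by
  classical
  set Cov : Set V := {v | ∃ t ∈ T, ∃ K, IsImportant G {t} (T \ {t}) K ∧ v ∈ K} with hCovdef
  obtain ⟨S₀, hS₀, hS₀min⟩ :=
    MWCProof.exists_min_measure {S | IsMultiwayCut G T S} hex Set.ncard
  suffices h : ∀ n (S : Set V), IsMultiwayCut G T S →
      (∀ S', IsMultiwayCut G T S' → S.ncard ≤ S'.ncard) → (S \ Cov).ncard ≤ n →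
      ∃ S', IsMultiwayCut G T S' ∧ (∀ S'', IsMultiwayCut G T S'' → S'.ncard ≤ S''.ncard) ∧
        ∀ v ∈ S', v ∈ Cov by
    obtain ⟨S', h1, h2, h3⟩ := h (S₀ \ Cov).ncard S₀ hS₀ hS₀min le_rfl
    exact ⟨S', h1, h2, fun v hv => h3 v hv⟩
  intro n
  induction n with
  | zero =>
      intro S hS hmin hle
      refine ⟨S, hS, hmin, fun v hv => ?_⟩
      by_contra hvC
      have hmem : v ∈ S \ Cov := ⟨hv, hvC⟩
      have h0 : (S \ Cov) = ∅ := (Set.ncard_eq_zero (Set.toFinite _)).mp (Nat.le_zero.mp hle)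
      rw [h0] at hmem
      exact Set.notMem_empty v hmem
  | succ n ih =>
      intro S hS hmin hle
      by_cases hcov : (S \ Cov) = ∅
      · refine ⟨S, hS, hmin, fun v hv => ?_⟩
        by_contra hvC
        have hmem : v ∈ S \ Cov := ⟨hv, hvC⟩
        rw [hcov] at hmem
        exact Set.notMem_empty v hmem
      · obtain ⟨v, hvS, hvC⟩ := Set.nonempty_iff_ne_empty.mpr hcov
        have hSv_not : ¬ IsMultiwayCut G T (S \ {v}) := by
          intro hMW
          exact (hmin _ hMW).not_gt (Set.ncard_diff_singleton_lt_of_mem hvS (Set.toFinite _))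
        have hdisj : Disjoint (S \ {v}) T := hS.1.mono_left Set.diff_subset
        have hfail : ¬ ∀ t₁ ∈ T, ∀ t₂ ∈ T, t₁ ≠ t₂ →
            ¬ (G.deleteSet (S \ {v})).Reachable t₁ t₂ :=
          fun hb => hSv_not ⟨hdisj, hb⟩
        push_neg at hfail
        obtain ⟨t₁, ht₁, t₂, ht₂, hne, hreach⟩ := hfail
        have hTXY : T ⊆ ({t₁} : Set V) ∪ (T \ {t₁}) := by
          intro t ht
          by_cases h : t = t₁
          · exact Or.inl (by simp [h])
          · exact Or.inr ⟨ht, h⟩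
        have hXYT : ({t₁} : Set V) ∪ (T \ {t₁}) ⊆ T := by
          intro t ht
          rcases ht with h | h
          · rw [Set.mem_singleton_iff] at h
            exact h ▸ ht₁
          · exact h.1
        have hSsep : IsSeparator G {t₁} (T \ {t₁}) S := by
          refine ⟨hS.1.mono_right hXYT, ?_⟩
          intro x hx y hy hr
          rw [Set.mem_singleton_iff] at hx
          subst hx
          exact hS.2 x ht₁ y hy.1 (fun e => hy.2 (by simp [e.symm])) hr
        obtain ⟨K, hKmem, hKmin⟩ := MWCProof.exists_min_measure
          {K' | K' ⊆ S ∧ IsSeparator G {t₁} (T \ {t₁}) K'} ⟨S, subset_rfl, hSsep⟩ Set.ncard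
        obtain ⟨hKS, hKsep⟩ := hKmem
        have hess : ∀ k ∈ K, ¬ IsSeparator G {t₁} (T \ {t₁}) (K \ {k}) := by
          intro k hk hsep'
          exact (hKmin _ ⟨Set.diff_subset.trans hKS, hsep'⟩).not_gt
            (Set.ncard_diff_singleton_lt_of_mem hk (Set.toFinite _))
        have hvK : v ∈ K := by
          by_contra hvK
          have hKSv : K ⊆ S \ {v} := by
            intro a ha
            refine ⟨hKS ha, fun h => ?_⟩
            rw [Set.mem_singleton_iff] at h
            exact hvK (h ▸ ha)
          have hblk : ¬ (G.deleteSet (S \ {v})).Reachable t₁ t₂ := by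
            intro hr
            refine hKsep.2 t₁ rfl t₂ ⟨ht₂, fun e => hne ?_⟩ (MWCProof.reach_mono G hKSv hr)
            rw [Set.mem_singleton_iff] at e
            exact e.symm
          exact hblk hreach
        obtain ⟨J, hJimp, hJcard, hJdom⟩ :=
          MWCProof.exists_important_dominating G {t₁} (T \ {t₁}) K hKsep hess
        set S₂ : Set V := (S \ K) ∪ J with hS₂def
        have hJT : Disjoint J T := (hJimp.1.1).mono_right hTXY
        have hS₂T : Disjoint S₂ T :=
          Set.disjoint_union_left.mpr ⟨hS.1.mono_left Set.diff_subset, hJT⟩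
        have hJS₂ : J ⊆ S₂ := Set.subset_union_right
        have hSsub : S ⊆ S₂ ∪ (S \ S₂) := by
          intro s hs
          by_cases h : s ∈ S₂
          · exact Or.inl h
          · exact Or.inr ⟨hs, h⟩
        have hSS₂K : S \ S₂ ⊆ K \ J := by
          rintro u ⟨huS, huS₂⟩
          have h1 : u ∉ J := fun h => huS₂ (Or.inr h)
          have h2 : u ∈ K := by
            by_contra h
            exact huS₂ (Or.inl ⟨huS, h⟩)
          exact ⟨h2, h1⟩
        have hblock : ∀ u₁ ∈ T, ∀ u₂ ∈ T, u₁ ≠ u₂ → ¬ (G.deleteSet S₂).Reachable u₁ u₂ := by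
          intro u₁ hu₁ u₂ hu₂ hne' hr
          obtain ⟨a, b, haT, hbT, haY, habne, hrab⟩ :
              ∃ a b, a ∈ T ∧ b ∈ T ∧ a ≠ t₁ ∧ a ≠ b ∧ (G.deleteSet S₂).Reachable a b := by
            by_cases h : u₁ = t₁
            · exact ⟨u₂, u₁, hu₂, hu₁, fun e => hne' (h.trans e.symm),
                fun e => hne' e.symm, hr.symm⟩
            · exact ⟨u₁, u₂, hu₁, hu₂, h, hne', hr⟩
          have haC : a ∉ S \ S₂ := fun hC => Set.disjoint_left.mp hS.1 hC.1 haT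
          rcases MWCProof.reach_split G hrab haC with hl | ⟨z, hzC, w, hw, hrw, hadj⟩
          · have hra : (G.deleteSet S).Reachable a b :=
              MWCProof.reach_mono G hSsub hl
            exact hS.2 a haT b hbT habne hra
          · obtain ⟨hzK, hzJ⟩ := hSS₂K hzC
            have hwJ : w ∉ J := fun h => hw (Or.inl (hJS₂ h))
            have hrwJ : (G.deleteSet J).Reachable a w :=
              MWCProof.reach_mono G (fun j hj => Or.inl (hJS₂ hj)) hrw
            have hraz : (G.deleteSet J).Reachable a z :=
              hrwJ.trans (SimpleGraph.Adj.reachable ⟨hadj, hwJ, hzJ⟩)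
            have hzNR := hJdom z hzK hzJ
            exact hzNR a ⟨haT, by simp [haY]⟩ hraz
        have hS₂MW : IsMultiwayCut G T S₂ := ⟨hS₂T, hblock⟩
        have hKcardS : K.ncard ≤ S.ncard := Set.ncard_le_ncard hKS (Set.toFinite _)
        have hS₂card : S₂.ncard ≤ S.ncard := by
          calc S₂.ncard ≤ (S \ K).ncard + J.ncard := Set.ncard_union_le _ _
          _ ≤ (S.ncard - K.ncard) + K.ncard := by
              rw [Set.ncard_diff hKS]
              exact Nat.add_le_add_left hJcard _
          _ = S.ncard := Nat.sub_add_cancel hKcardS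
        have hS₂min : ∀ S', IsMultiwayCut G T S' → S₂.ncard ≤ S'.ncard :=
          fun S' h' => le_trans hS₂card (hmin S' h')
        have hsub2 : S₂ \ Cov ⊆ (S \ Cov) \ {v} := by
          rintro u ⟨huS₂, huC⟩
          rcases huS₂ with h | h
          · refine ⟨⟨h.1, huC⟩, fun he => ?_⟩
            rw [Set.mem_singleton_iff] at he
            exact h.2 (he ▸ hvK)
          · exact absurd (⟨t₁, ht₁, J, hJimp, h⟩ : u ∈ Cov) huC
        have hbound : (S₂ \ Cov).ncard ≤ n := by
          have h1 : (S₂ \ Cov).ncard ≤ ((S \ Cov) \ {v}).ncard :=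
            Set.ncard_le_ncard hsub2 (Set.toFinite _)
          have h2 : ((S \ Cov) \ {v}).ncard < (S \ Cov).ncard :=
            Set.ncard_diff_singleton_lt_of_mem ⟨hvS, hvC⟩ (Set.toFinite _)
          omega
        exact ih S₂ hS₂MW hS₂min hbound
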